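/- Let N be a positive natural number, let Ω ⊆ ℝ^N be a measurable set of finite positive Lebesgue measure, let q, p be real numbers with 0 < q < 1 < p, and let λ > 0. Let k, h : ℝ^N → ℝ be essentially bounded on Ω with k ≥ 0 a.e. on Ω and essinf_{x∈Ω} h(x) > 0. Then there exists a real number m < 0 such that for every differentiable function u : ℝ^N → ℝ with ∫_Ω |∇u|² dx < ∞ and ∫_Ω |u|^{p+1} dx < ∞, the energy F_λ(u) := (1/2)·∫_Ω |∇u|² dx − (λ/(q+1))·∫_Ω k·|u|^{q+1} dx + (1/(p+1))·∫_Ω h·|u|^{p+1} dx satisfies F_λ(u) ≥ (1/2)·∫_Ω |∇u|² dx + m. In particular F_λ(u) → +∞ as ∫_Ω |∇u|² dx → ∞. -/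

import Mathlib

open MeasureTheory

lemma aux_pt (q p a b : ℝ) (hq0 : 0 < q) (hq1 : q < 1) (hp : 1 < p)
    (ha : 0 ≤ a) (hb : 0 < b) (t : ℝ) (ht : 0 ≤ t) :
    a * t ^ (q + 1) ≤ b * t ^ (p + 1) +
      a * (max 1 ((a / b) ^ (1 / (p - q)))) ^ (q + 1) := by
  set R : ℝ := max 1 ((a / b) ^ (1 / (p - q))) with hR
  have hR1 : (1:ℝ) ≤ R := le_max_left _ _
  have hpq : 0 < p - q := by linarith
  rcases le_total t R with hle | hle
  · have h1 : a * t ^ (q + 1) ≤ a * R ^ (q + 1) := by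
      apply mul_le_mul_of_nonneg_left _ ha
      exact Real.rpow_le_rpow ht hle (by linarith)
    have h2 : 0 ≤ b * t ^ (p + 1) :=
      mul_nonneg hb.le (Real.rpow_nonneg ht _)
    linarith
  · have ht1 : (1:ℝ) ≤ t := le_trans hR1 hle
    have ht0 : 0 < t := by linarith
    have hab : a / b ≤ t ^ (p - q) := by
      calc a / b = ((a / b) ^ (1 / (p - q))) ^ (p - q) := by
            rw [← Real.rpow_mul (div_nonneg ha hb.le), one_div,
              inv_mul_cancel₀ hpq.ne', Real.rpow_one]
        _ ≤ t ^ (p - q) := Real.rpow_le_rpow (Real.rpow_nonneg (div_nonneg ha hb.le) _)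
            (le_trans (le_max_right _ _) hle) hpq.le
    have key : a * t ^ (q + 1) ≤ b * t ^ (p + 1) := by
      have h3 : a ≤ b * t ^ (p - q) := by
        rw [div_le_iff₀ hb] at hab; linarith [hab]
      calc a * t ^ (q + 1) ≤ (b * t ^ (p - q)) * t ^ (q + 1) :=
            mul_le_mul_of_nonneg_right h3 (Real.rpow_nonneg ht0.le _)
        _ = b * t ^ (p + 1) := by
            rw [mul_assoc, ← Real.rpow_add ht0]; ring_nf
    have h2 : 0 ≤ a * R ^ (q + 1) :=
      mul_nonneg ha (Real.rpow_nonneg (by linarith) _)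
    linarith

set_option maxHeartbeats 1000000 in
/-- coercivity bound for the energy functional
`F_λ(u) = (1/2)∫|∇u|² − (λ/(q+1))∫ k|u|^{q+1} + (1/(p+1))∫ h|u|^{p+1}`:
there is `m < 0` with `F_λ(u) ≥ (1/2)∫|∇u|² + m` for every differentiable `u`
with `∫|∇u|² < ∞` and `∫|u|^{p+1} < ∞`. -/
theorem stmt_10 (N : ℕ) (hN : 0 < N) (Ω : Set (EuclideanSpace ℝ (Fin N)))
    (hΩ : MeasurableSet Ω) (hΩfin : volume Ω < ⊤) (hΩpos : 0 < volume Ω)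
    (q p lam : ℝ) (hq0 : 0 < q) (hq1 : q < 1) (hp : 1 < p) (hlam : 0 < lam)
    (k h : EuclideanSpace ℝ (Fin N) → ℝ)
    (hkb : MemLp k ⊤ (volume.restrict Ω)) (hhb : MemLp h ⊤ (volume.restrict Ω))
    (hk0 : ∀ᵐ x ∂(volume.restrict Ω), 0 ≤ k x)
    (hhinf : 0 < essInf h (volume.restrict Ω)) :
    ∃ m : ℝ, m < 0 ∧ ∀ u : EuclideanSpace ℝ (Fin N) → ℝ, Differentiable ℝ u →
      IntegrableOn (fun x => ‖fderiv ℝ u x‖ ^ 2) Ω volume →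
      IntegrableOn (fun x => |u x| ^ (p + 1)) Ω volume →
      (1 / 2) * (∫ x in Ω, ‖fderiv ℝ u x‖ ^ 2)
          - (lam / (q + 1)) * (∫ x in Ω, k x * |u x| ^ (q + 1))
          + (1 / (p + 1)) * (∫ x in Ω, h x * |u x| ^ (p + 1)) ≥
        (1 / 2) * (∫ x in Ω, ‖fderiv ℝ u x‖ ^ 2) + m := by
  set μ := volume.restrict Ω with hμ
  -- essential bound on k
  have hkfin : eLpNormEssSup k μ < ⊤ := by
    have := hkb.2; rwa [eLpNorm_exponent_top] at this
  set K : ℝ := (eLpNormEssSup k μ).toReal with hK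
  have hK0 : 0 ≤ K := ENNReal.toReal_nonneg
  have hKbd : ∀ᵐ x ∂μ, ‖k x‖ ≤ K := by
    filter_upwards [ae_le_eLpNormEssSup (f := k) (μ := μ)] with x hx
    have := ENNReal.toReal_mono hkfin.ne hx
    simpa [hK, coe_nnnorm] using this
  -- essential bound on h
  have hhfin : eLpNormEssSup h μ < ⊤ := by
    have := hhb.2; rwa [eLpNorm_exponent_top] at this
  have hHbd : ∀ᵐ x ∂μ, ‖h x‖ ≤ (eLpNormEssSup h μ).toReal := by
    filter_upwards [ae_le_eLpNormEssSup (f := h) (μ := μ)] with x hx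
    have := ENNReal.toReal_mono hhfin.ne hx
    simpa [coe_nnnorm] using this
  set c : ℝ := essInf h μ with hc
  have hcbd : ∀ᵐ x ∂μ, c ≤ h x := by
    apply ae_essInf_le
    refine ⟨-(eLpNormEssSup h μ).toReal, ?_⟩
    rw [Filter.eventually_map]
    filter_upwards [hHbd] with x hx
    simpa using (abs_le.mp (by simpa [Real.norm_eq_abs] using hx)).1
  set a : ℝ := lam * K / (q + 1) with ha
  set b : ℝ := c / (p + 1) with hb
  have ha0 : 0 ≤ a := div_nonneg (mul_nonneg hlam.le hK0) (by linarith)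
  have hb0 : 0 < b := div_pos hhinf (by linarith)
  set M : ℝ := a * (max 1 ((a / b) ^ (1 / (p - q)))) ^ (q + 1) with hM
  have hM0 : 0 ≤ M :=
    mul_nonneg ha0 (Real.rpow_nonneg (le_trans zero_le_one (le_max_left _ _)) _)
  refine ⟨-(M * (volume Ω).toReal + 1), by
    have := mul_nonneg hM0 (ENNReal.toReal_nonneg (a := volume Ω)); linarith, ?_⟩
  intro u hu hgrad hup
  have hucont : Continuous u := hu.continuous
  haveI : IsFiniteMeasure μ := ⟨by rwa [Measure.restrict_apply_univ]⟩
  have humeas : AEStronglyMeasurable (fun x => |u x| ^ (q + 1)) μ :=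
    (hucont.abs.rpow_const (fun x => Or.inr (by linarith))).aestronglyMeasurable
  -- integrability of |u|^{q+1}
  have huq : Integrable (fun x => |u x| ^ (q + 1)) μ := by
    refine Integrable.mono' ((integrable_const (1:ℝ)).add hup) humeas ?_
    filter_upwards with x
    rw [Real.norm_eq_abs, abs_of_nonneg (Real.rpow_nonneg (abs_nonneg _) _)]
    rcases le_total (|u x|) 1 with hle | hle
    · have h1 : |u x| ^ (q + 1) ≤ 1 :=
        Real.rpow_le_one (abs_nonneg _) hle (by linarith)
      have h2 : (0:ℝ) ≤ |u x| ^ (p + 1) := Real.rpow_nonneg (abs_nonneg _) _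
      simpa using by linarith
    · have h1 : |u x| ^ (q + 1) ≤ |u x| ^ (p + 1) :=
        Real.rpow_le_rpow_of_exponent_le hle (by linarith)
      simpa using by linarith
  have hg1 : Integrable (fun x => k x * |u x| ^ (q + 1)) μ :=
    huq.bdd_mul hkb.1 hKbd
  have hg2 : Integrable (fun x => h x * |u x| ^ (p + 1)) μ :=
    hup.bdd_mul hhb.1 hHbd
  -- the key integral inequality
  have hkey : (lam / (q + 1)) * (∫ x in Ω, k x * |u x| ^ (q + 1))
      - (1 / (p + 1)) * (∫ x in Ω, h x * |u x| ^ (p + 1))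
      ≤ M * (volume Ω).toReal := by
    have hmono : ∫ x, ((lam / (q + 1)) * (k x * |u x| ^ (q + 1))
          - (1 / (p + 1)) * (h x * |u x| ^ (p + 1))) ∂μ ≤ ∫ _x, M ∂μ := by
      apply integral_mono_ae ((hg1.const_mul _).sub (hg2.const_mul _))
        (integrable_const M)
      filter_upwards [hKbd, hcbd, hk0] with x hxK hxc hxk
      simp only [Pi.sub_apply]
      have ht := abs_nonneg (u x)
      have h1 : (lam / (q + 1)) * (k x * |u x| ^ (q + 1)) ≤ a * |u x| ^ (q + 1) := by
        have : k x ≤ K := le_trans (le_abs_self _) (by simpa [Real.norm_eq_abs] using hxK)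
        have hr : (0:ℝ) ≤ |u x| ^ (q + 1) := Real.rpow_nonneg ht _
        have : (lam / (q + 1)) * k x ≤ (lam / (q + 1)) * K :=
          mul_le_mul_of_nonneg_left this (by positivity)
        calc (lam / (q + 1)) * (k x * |u x| ^ (q + 1))
            = ((lam / (q + 1)) * k x) * |u x| ^ (q + 1) := by ring
          _ ≤ ((lam / (q + 1)) * K) * |u x| ^ (q + 1) :=
              mul_le_mul_of_nonneg_right this hr
          _ = a * |u x| ^ (q + 1) := by rw [ha]; ring
      have h2 : b * |u x| ^ (p + 1) ≤ (1 / (p + 1)) * (h x * |u x| ^ (p + 1)) := by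
        have hr : (0:ℝ) ≤ |u x| ^ (p + 1) := Real.rpow_nonneg ht _
        have : c * |u x| ^ (p + 1) ≤ h x * |u x| ^ (p + 1) :=
          mul_le_mul_of_nonneg_right hxc hr
        calc b * |u x| ^ (p + 1) = (1 / (p + 1)) * (c * |u x| ^ (p + 1)) := by
              rw [hb]; ring
          _ ≤ (1 / (p + 1)) * (h x * |u x| ^ (p + 1)) :=
              mul_le_mul_of_nonneg_left this (by positivity)
      have := aux_pt q p a b hq0 hq1 hp ha0 hb0 (|u x|) ht
      rw [← hM] at this
      linarith
    have e2 : ∫ _x, M ∂μ = M * (volume Ω).toReal := by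
      rw [integral_const, hμ, measureReal_restrict_apply_univ, smul_eq_mul, mul_comm, measureReal_def]
    have e1 : ∫ x, ((lam / (q + 1)) * (k x * |u x| ^ (q + 1))
          - (1 / (p + 1)) * (h x * |u x| ^ (p + 1))) ∂μ
        = (lam / (q + 1)) * (∫ x in Ω, k x * |u x| ^ (q + 1))
          - (1 / (p + 1)) * (∫ x in Ω, h x * |u x| ^ (p + 1)) := by
      rw [integral_sub (hg1.const_mul _) (hg2.const_mul _), integral_const_mul,
        integral_const_mul]
    rw [e2] at hmono
    rw [← e1]
    exact hmono
  linarith [hkey]
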